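/- Let δ ≥ 0, p ∈ (1,∞), and let F(A) = (δ + |A^sym|)^((p-2)/2) A^sym. For every ε > 0 there exists c_ε ≥ 1 depending only on ε, p, δ such that for all d×d matrices A, B and all r ≥ 0: φ_{|A^sym|}(r) ≤ c_ε · φ_{|B^sym|}(r) + ε · |F(A) - F(B)|², where φ_a denotes the shifted N-function with φ_a'(t) = (δ+a+t)^(p-2)·t·(a+t)/(a+t). -/

import Mathlib

open Real MeasureTheory intervalIntegral

/-- The shifted N-function `φ_a(t) = ∫₀ᵗ φ'(a+s)·s/(a+s) ds`, where `φ'(t) = (δ+t)^(p-2) t`. -/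
noncomputable def shiftedN (δ p a : ℝ) (t : ℝ) : ℝ :=
  ∫ s in (0:ℝ)..t, (δ + (a + s)) ^ (p - 2) * (a + s) * (s / (a + s))

/-- The Fenchel conjugate of a function `f : ℝ → ℝ` over `t ≥ 0`:
`f*(s) = sup_{t ≥ 0} (s·t - f(t))`. -/
noncomputable def fenchel (f : ℝ → ℝ) (s : ℝ) : ℝ :=
  sSup {x : ℝ | ∃ t : ℝ, 0 ≤ t ∧ x = s * t - f t}

open Matrix in
/-- Symmetric part of a square matrix. -/
noncomputable def msym {d : ℕ} (A : Matrix (Fin d) (Fin d) ℝ) : Matrix (Fin d) (Fin d) ℝ :=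
  (1/2 : ℝ) • (A + Aᵀ)

/-- Frobenius norm of a matrix. -/
noncomputable def frob {d : ℕ} (A : Matrix (Fin d) (Fin d) ℝ) : ℝ :=
  Real.sqrt (∑ i, ∑ j, (A i j) ^ 2)

/-- Frobenius inner product of two matrices. -/
noncomputable def frobInner {d : ℕ} (A B : Matrix (Fin d) (Fin d) ℝ) : ℝ :=
  ∑ i, ∑ j, A i j * B i j

/-- The extra-stress tensor `S(A) = (δ + |A^sym|)^(p-2) A^sym` (with `ν₀ = 1`). -/
noncomputable def Smap (δ p : ℝ) {d : ℕ} (A : Matrix (Fin d) (Fin d) ℝ) :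
    Matrix (Fin d) (Fin d) ℝ :=
  ((δ + frob (msym A)) ^ (p - 2)) • msym A

/-- The nonlinear quantity `F(A) = (δ + |A^sym|)^((p-2)/2) A^sym`. -/
noncomputable def Fmap (δ p : ℝ) {d : ℕ} (A : Matrix (Fin d) (Fin d) ℝ) :
    Matrix (Fin d) (Fin d) ℝ :=
  ((δ + frob (msym A)) ^ ((p - 2) / 2)) • msym A


lemma bern {x t : ℝ} (hx : 0 ≤ x) (ht0 : 0 ≤ t) (ht1 : t ≤ 1) : x ^ t ≤ 1 + t * (x - 1) := by
  have := rpow_one_add_le_one_add_mul_self (s := x - 1) (by linarith) ht0 ht1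
  simpa using this

lemma lemF {δ p : ℝ} (hδ : 0 ≤ δ) (hp : 1 < p) {a b : ℝ} (hb : 0 ≤ b) (hba : b ≤ a) :
    (1/2) * (δ+a)^((p-2)/2) * (a-b) ≤ (δ+a)^((p-2)/2)*a - (δ+b)^((p-2)/2)*b := by
  set e : ℝ := (p-2)/2 with he
  have hee : -(1/2) < e := by rw [he]; linarith
  have ha : 0 ≤ a := hb.trans hba
  rcases le_or_gt 0 e with he0 | he0
  · have h1 : (δ+b)^e ≤ (δ+a)^e := rpow_le_rpow (by linarith) (by linarith) he0
    have h2 : (δ+b)^e * b ≤ (δ+a)^e * b := mul_le_mul_of_nonneg_right h1 hb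
    have h3 : (0:ℝ) ≤ (δ+a)^e := rpow_nonneg (by linarith) _
    nlinarith
  · rcases eq_or_lt_of_le (by linarith : (0:ℝ) ≤ δ + a) with hA | hA
    · have ha0 : a = 0 := by linarith
      have hb0 : b = 0 := by linarith
      simp [ha0, hb0]
    rcases eq_or_lt_of_le (by linarith : (0:ℝ) ≤ δ + b) with hB | hB
    · have hd0 : δ = 0 := by linarith
      have hb0 : b = 0 := by linarith
      have : (0:ℝ) ≤ (δ+a)^e * a := mul_nonneg (rpow_nonneg (by linarith) _) ha
      simp only [hb0, mul_zero, sub_zero]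
      nlinarith
    · set r : ℝ := (δ+b)/(δ+a) with hr
      have hr0 : 0 < r := div_pos hB hA
      have hr1 : r ≤ 1 := by
        rw [hr, div_le_one hA]; linarith
      have hre1 : 1 ≤ r ^ e := one_le_rpow_of_pos_of_le_one_of_nonpos hr0 hr1 he0.le
      -- Bernoulli: r^(1+e) ≤ 1 + (1+e)(r-1)
      have ht0 : (0:ℝ) ≤ 1 + e := by linarith
      have ht1 : 1 + e ≤ 1 := by linarith
      have hbern : r ^ (1+e) ≤ 1 + (1+e) * (r - 1) := bern hr0.le ht0 ht1
      have hsplit : r ^ (1+e) = r * r ^ e := by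
        rw [rpow_add hr0, rpow_one]
      -- key : b * (r^e - 1) ≤ (1/2) * (a - b)
      have hdb : δ + b = r * (δ + a) := by rw [hr, div_mul_cancel₀ _ hA.ne']
      have hkey : b * (r ^ e - 1) ≤ (1/2) * (a - b) := by
        have h1 : b * (r ^ e - 1) ≤ (δ + b) * (r ^ e - 1) :=
          mul_le_mul_of_nonneg_right (by linarith) (by linarith)
        have h2 : (δ + b) * (r ^ e - 1) = (δ+a) * (r ^ (1+e) - r) := by
          rw [hsplit, hdb]; ring
        have h3 : r ^ (1+e) - r ≤ (-e) * (1 - r) := by nlinarith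
        have h4 : (-e) * (1-r) ≤ (1/2) * (1 - r) := by nlinarith
        have h5 : (δ+a) * (r ^ (1+e) - r) ≤ (δ+a) * ((1/2) * (1-r)) := by
          apply mul_le_mul_of_nonneg_left (by linarith) hA.le
        have h6 : (δ+a) * ((1/2)*(1-r)) = (1/2) * (a - b) := by
          have : (δ+a) * r = δ + b := by rw [hdb]; ring
          nlinarith
        linarith
      have hBe : (δ+b)^e = (δ+a)^e * r ^ e := by
        rw [hr, div_rpow (by linarith) (by linarith)]
        field_simp [(rpow_pos_of_pos hA e).ne']
      have hApos : 0 < (δ+a)^e := rpow_pos_of_pos hA e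
      rw [hBe]
      nlinarith [mul_le_mul_of_nonneg_left hkey hApos.le]

noncomputable def embed {d : ℕ} (A : Matrix (Fin d) (Fin d) ℝ) :
    EuclideanSpace ℝ (Fin d × Fin d) :=
  (WithLp.equiv 2 ((Fin d × Fin d) → ℝ)).symm (fun ij => A ij.1 ij.2)

lemma frob_eq_norm {d : ℕ} (A : Matrix (Fin d) (Fin d) ℝ) : frob A = ‖embed A‖ := by
  rw [EuclideanSpace.norm_eq, frob]
  congr 1
  rw [Fintype.sum_prod_type]
  simp [embed, sq_abs]

lemma frob_nonneg {d : ℕ} (A : Matrix (Fin d) (Fin d) ℝ) : 0 ≤ frob A := Real.sqrt_nonneg _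

lemma frob_sub_frob_le {d : ℕ} (A B : Matrix (Fin d) (Fin d) ℝ) :
    |frob A - frob B| ≤ frob (A - B) := by
  rw [frob_eq_norm, frob_eq_norm, frob_eq_norm]
  have h : embed (A - B) = embed A - embed B := rfl
  rw [h]
  exact abs_norm_sub_norm_le _ _

lemma frob_smul {d : ℕ} (c : ℝ) (M : Matrix (Fin d) (Fin d) ℝ) :
    frob (c • M) = |c| * frob M := by
  rw [frob_eq_norm, frob_eq_norm]
  have h : embed (c • M) = c • embed M := rfl
  rw [h, norm_smul, Real.norm_eq_abs]


-- integrability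
lemma intble {p : ℝ} (hp : 1 < p) {c r : ℝ} (hc : 0 ≤ c) (hr : 0 ≤ r) :
    IntervalIntegrable (fun s => (c+s)^(p-2) * s) volume 0 r := by
  rcases eq_or_lt_of_le hc with hc0 | hc0
  · rw [intervalIntegrable_iff]
    have h2 : IntervalIntegrable (fun s : ℝ => s ^ (p-1)) volume 0 r :=
      intervalIntegrable_rpow' (by linarith)
    rw [intervalIntegrable_iff] at h2
    apply h2.congr_fun _ measurableSet_uIoc
    intro s hs
    rw [Set.uIoc_of_le hr] at hs
    rw [← hc0]
    simp only [zero_add]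
    rw [← Real.rpow_add_one (ne_of_gt hs.1)]
    congr 1
    ring
  · apply ContinuousOn.intervalIntegrable
    apply ContinuousOn.mul _ continuousOn_id
    apply ContinuousOn.rpow_const
    · fun_prop
    · intro s hs
      left
      rw [Set.uIcc_of_le hr] at hs
      have := hs.1
      positivity

lemma int_linear (K u v : ℝ) : ∫ s in u..v, K * s = K * (v^2 - u^2) / 2 := by
  rw [intervalIntegral.integral_const_mul, integral_id]
  ring

-- upper bound
lemma upper {p : ℝ} (hp : 1 < p) {c r : ℝ} (hc : 0 ≤ c) (hr : 0 < r) :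
    ∫ s in (0:ℝ)..r, (c+s)^(p-2) * s ≤ 2^|p-2| * ((c+r)^(p-2) * r^2) := by
  have h2 : (1:ℝ) ≤ 2^|p-2| := Real.one_le_rpow one_le_two (abs_nonneg _)
  have hcr : 0 < c + r := by linarith
  have hcrq : 0 ≤ (c+r)^(p-2) := Real.rpow_nonneg hcr.le _
  rcases le_or_gt 0 (p-2) with hq | hq
  · have hmono : ∫ s in (0:ℝ)..r, (c+s)^(p-2) * s ≤ ∫ s in (0:ℝ)..r, (c+r)^(p-2) * s := by
      apply intervalIntegral.integral_mono_on hr.le (intble hp hc hr.le)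
      · apply ContinuousOn.intervalIntegrable; fun_prop
      · intro s hs
        apply mul_le_mul_of_nonneg_right _ hs.1
        exact Real.rpow_le_rpow (by linarith [hs.1]) (by linarith [hs.2]) hq
    rw [int_linear] at hmono
    norm_num at hmono
    have hXr : 0 ≤ (c+r)^(p-2)*r^2 := mul_nonneg hcrq (sq_nonneg r)
    nlinarith [mul_le_mul_of_nonneg_right h2 hXr]
  · -- p < 2
    rcases le_or_gt r c with hrc | hrc
    · -- r ≤ c : integrand ≤ c^(p-2) * s
      have hc0 : 0 < c := lt_of_lt_of_le hr hrc
      have hmono : ∫ s in (0:ℝ)..r, (c+s)^(p-2) * s ≤ ∫ s in (0:ℝ)..r, c^(p-2) * s := by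
        apply intervalIntegral.integral_mono_on hr.le (intble hp hc hr.le)
        · apply ContinuousOn.intervalIntegrable; fun_prop
        · intro s hs
          apply mul_le_mul_of_nonneg_right _ hs.1
          exact Real.rpow_le_rpow_of_nonpos hc0 (by linarith [hs.1]) hq.le
      rw [int_linear] at hmono
      norm_num at hmono
      have hcq : c^(p-2) ≤ 2^(-(p-2)) * (c+r)^(p-2) := by
        have h1 : (c+r)^(p-2) ≥ (2*c)^(p-2) :=
          Real.rpow_le_rpow_of_nonpos hcr (by linarith) hq.le
        rw [Real.mul_rpow (by norm_num) hc0.le] at h1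
        have h2q : (0:ℝ) < 2^(p-2) := Real.rpow_pos_of_pos (by norm_num) _
        rw [Real.rpow_neg (by norm_num)]
        rw [ge_iff_le, ← le_div_iff₀' h2q] at h1
        rw [div_eq_inv_mul] at h1
        exact h1
      have habs : |p-2| = -(p-2) := abs_of_neg (by linarith)
      rw [habs]
      have hXr : 0 ≤ (c+r)^(p-2)*r^2 := mul_nonneg hcrq (sq_nonneg r)
      nlinarith [mul_le_mul_of_nonneg_right hcq (sq_nonneg r), hXr,
        Real.rpow_nonneg (show (0:ℝ) ≤ 2 by norm_num) (-(p-2))]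
    · -- c < r : integrand ≤ s^(p-1)
      have hmono : ∫ s in (0:ℝ)..r, (c+s)^(p-2) * s ≤ ∫ s in (0:ℝ)..r, s^(p-1) := by
        apply intervalIntegral.integral_mono_on hr.le (intble hp hc hr.le)
          (intervalIntegrable_rpow' (by linarith))
        intro s hs
        rcases eq_or_lt_of_le hs.1 with h0 | h0
        · rw [← h0]
          simp [Real.zero_rpow (show p - 1 ≠ 0 by linarith)]
        · have : (c+s)^(p-2) ≤ s^(p-2) :=
            Real.rpow_le_rpow_of_nonpos h0 (by linarith) hq.le
          calc (c+s)^(p-2) * s ≤ s^(p-2) * s := mul_le_mul_of_nonneg_right this hs.1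
            _ = s^(p-1) := by
                rw [← Real.rpow_add_one (ne_of_gt h0)]; congr 1; ring
      have hval : ∫ s in (0:ℝ)..r, s^(p-1) = r^p / p := by
        rw [integral_rpow (Or.inl (by linarith))]
        have hpe : p - 1 + 1 = p := by ring
        rw [hpe, Real.zero_rpow (by linarith : p ≠ 0)]
        ring
      rw [hval] at hmono
      have hrp : r^p = r^(p-2) * r^2 := by
        rw [← Real.rpow_natCast r 2, ← Real.rpow_add hr]
        congr 1
        norm_num
      have hrq : r^(p-2) ≤ 2^(-(p-2)) * (c+r)^(p-2) := by
        have h1 : (2*r)^(p-2) ≤ (c+r)^(p-2) :=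
          Real.rpow_le_rpow_of_nonpos hcr (by linarith) hq.le
        rw [Real.mul_rpow (by norm_num) hr.le] at h1
        have h2q : (0:ℝ) < 2^(p-2) := Real.rpow_pos_of_pos (by norm_num) _
        rw [Real.rpow_neg (by norm_num)]
        rw [← le_div_iff₀' h2q] at h1
        rw [div_eq_inv_mul] at h1
        exact h1
      have habs : |p-2| = -(p-2) := abs_of_neg (by linarith)
      rw [habs]
      have hr2 : (0:ℝ) ≤ r^2 := sq_nonneg r
      have hp1 : 1/p < 1 := by
        rw [div_lt_one (by linarith)]; linarith
      calc ∫ s in (0:ℝ)..r, (c+s)^(p-2) * s ≤ r^p/p := hmono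
        _ ≤ r^p := by
            have : 0 ≤ r^p := Real.rpow_nonneg hr.le _
            rw [div_le_iff₀ (by linarith)]
            nlinarith
        _ = r^(p-2) * r^2 := hrp
        _ ≤ 2^(-(p-2)) * (c+r)^(p-2) * r^2 := by nlinarith
        _ = 2^(-(p-2)) * ((c+r)^(p-2) * r^2) := by ring

lemma lower {p : ℝ} (hp : 1 < p) {c r : ℝ} (hc : 0 ≤ c) (hr : 0 ≤ r) :
    2^(-|p-2|)/4 * ((c+r)^(p-2) * r^2) ≤ ∫ s in (0:ℝ)..r, (c+s)^(p-2) * s := by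
  rcases eq_or_lt_of_le hr with hr0 | hr0
  · rw [← hr0]; simp
  have hcr : 0 < c + r := by linarith
  have hcrq : 0 ≤ (c+r)^(p-2) := Real.rpow_nonneg hcr.le _
  have h2l : 2^(-|p-2|) ≤ (1:ℝ) :=
    Real.rpow_le_one_of_one_le_of_nonpos one_le_two (neg_nonpos.2 (abs_nonneg _))
  have h2p : (0:ℝ) < 2^(-|p-2|) := Real.rpow_pos_of_pos (by norm_num) _
  rcases lt_or_ge (p-2) 0 with hq | hq
  · -- p < 2 : integrand ≥ (c+r)^(p-2) * s
    have hmono : ∫ s in (0:ℝ)..r, (c+r)^(p-2) * s ≤ ∫ s in (0:ℝ)..r, (c+s)^(p-2) * s := by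
      refine intervalIntegral.integral_mono_on hr ?_ (intble hp hc hr) ?_
      · apply ContinuousOn.intervalIntegrable; fun_prop
      · intro s hs
        rcases eq_or_lt_of_le hs.1 with h0 | h0
        · rw [← h0]; simp
        · refine mul_le_mul_of_nonneg_right ?_ hs.1
          exact Real.rpow_le_rpow_of_nonpos (by linarith) (by linarith [hs.2]) hq.le
    rw [int_linear] at hmono
    norm_num at hmono
    nlinarith [mul_nonneg hcrq (sq_nonneg r)]
  · -- p ≥ 2 : restrict to [r/2, r]
    have hint1 : IntervalIntegrable (fun s => (c+s)^(p-2) * s) MeasureTheory.volume 0 (r/2) :=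
      intble hp hc (by linarith)
    have hint2 : IntervalIntegrable (fun s => (c+s)^(p-2) * s) MeasureTheory.volume (r/2) r := by
      apply (intble hp hc hr).mono_set
      rw [Set.uIcc_of_le (by linarith : r/2 ≤ r), Set.uIcc_of_le hr]
      exact Set.Icc_subset_Icc (by linarith) le_rfl
    have hsplit : ∫ s in (0:ℝ)..r, (c+s)^(p-2) * s
        = (∫ s in (0:ℝ)..(r/2), (c+s)^(p-2) * s) + ∫ s in (r/2)..r, (c+s)^(p-2) * s :=
      (intervalIntegral.integral_add_adjacent_intervals hint1 hint2).symm
    have hpos1 : 0 ≤ ∫ s in (0:ℝ)..(r/2), (c+s)^(p-2) * s := by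
      apply intervalIntegral.integral_nonneg (by linarith)
      intro s hs
      exact mul_nonneg (Real.rpow_nonneg (by linarith [hs.1]) _) hs.1
    have hmono : ∫ s in (r/2)..r, ((c+r)/2)^(p-2) * s ≤ ∫ s in (r/2)..r, (c+s)^(p-2) * s := by
      refine intervalIntegral.integral_mono_on (by linarith) ?_ hint2 ?_
      · apply ContinuousOn.intervalIntegrable; fun_prop
      · intro s hs
        refine mul_le_mul_of_nonneg_right ?_ (by linarith [hs.1])
        exact Real.rpow_le_rpow (by positivity) (by linarith [hs.1]) hq
    rw [int_linear] at hmono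
    have hhalf : ((c+r)/2)^(p-2) = (c+r)^(p-2) * 2^(-(p-2)) := by
      rw [Real.div_rpow hcr.le (by norm_num), Real.rpow_neg (by norm_num)]
      ring
    have habs : |p-2| = p-2 := abs_of_nonneg hq
    rw [habs]
    rw [hhalf] at hmono
    nlinarith [mul_nonneg (mul_nonneg (Real.rpow_nonneg (show (0:ℝ) ≤ 2 by norm_num) (-(p-2))) hcrq) (sq_nonneg r)]


set_option maxHeartbeats 2000000 in
lemma star_lemma {δ p : ℝ} (hδ : 0 ≤ δ) (hp : 1 < p) {ε : ℝ} (hε : 0 < ε) :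
    ∃ c' : ℝ, 1 ≤ c' ∧ ∀ a b r : ℝ, 0 ≤ a → 0 ≤ b → 0 < r →
      (δ+a+r)^(p-2) * r^2 ≤ c' * ((δ+b+r)^(p-2) * r^2)
        + ε * ((δ + max a b)^(p-2) * (a-b)^2) := by
  rcases le_or_gt 0 (p-2) with hq | hq
  · -- p ≥ 2
    set lam : ℝ := Real.sqrt (ε / 2^(p-2)) with hlam
    have h2q : (0:ℝ) < 2^(p-2) := Real.rpow_pos_of_pos (by norm_num) _
    have h2q1 : (1:ℝ) ≤ 2^(p-2) := Real.one_le_rpow one_le_two hq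
    have hlampos : 0 < lam := Real.sqrt_pos.2 (div_pos hε h2q)
    have hlamsq : lam^2 = ε / 2^(p-2) := Real.sq_sqrt (le_of_lt (div_pos hε h2q))
    clear_value lam
    have hLpos : (0:ℝ) < lam^(-(p-2)) := Real.rpow_pos_of_pos hlampos _
    have hc' : (1:ℝ) ≤ 2^(p-2) * (1 + lam^(-(p-2))) := by nlinarith
    refine ⟨2^(p-2) * (1 + lam^(-(p-2))), hc', ?_⟩
    intro a b r ha hb hr
    have hEnn : 0 ≤ (δ + max a b)^(p-2) * (a-b)^2 :=
      mul_nonneg (Real.rpow_nonneg (by positivity) _) (sq_nonneg _)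
    have hEe : 0 ≤ ε * ((δ + max a b)^(p-2) * (a-b)^2) := mul_nonneg hε.le hEnn
    have hYpos : (0:ℝ) < δ + b + r := by linarith
    have hYq : 0 ≤ (δ+b+r)^(p-2) := Real.rpow_nonneg hYpos.le _
    have hT : 0 ≤ (δ+b+r)^(p-2) * r^2 := mul_nonneg hYq (sq_nonneg r)
    rcases le_or_gt a b with hab | hab
    · -- a ≤ b : monotone
      have h1 : (δ+a+r)^(p-2) ≤ (δ+b+r)^(p-2) :=
        Real.rpow_le_rpow (by linarith) (by linarith) hq
      have h2 : (δ+a+r)^(p-2) * r^2 ≤ (δ+b+r)^(p-2) * r^2 :=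
        mul_le_mul_of_nonneg_right h1 (sq_nonneg r)
      have h3 := mul_le_mul_of_nonneg_right hc' hT
      rw [one_mul] at h3
      linarith
    · -- b < a
      set h : ℝ := a - b with hh
      clear_value h
      have hhp : 0 < h := by rw [hh]; linarith
      have hmax : max a b = a := max_eq_left hab.le
      have hHq : 0 ≤ h^(p-2) := Real.rpow_nonneg hhp.le _
      have hstep1 : (δ+a+r)^(p-2) ≤ 2^(p-2) * ((δ+b+r)^(p-2) + h^(p-2)) := by
        have hle : δ+a+r ≤ 2 * max (δ+b+r) h := by
          have : δ + a + r = (δ+b+r) + h := by rw [hh]; ring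
          rcases le_total (δ+b+r) h with hc | hc
          · rw [max_eq_right hc]; linarith
          · rw [max_eq_left hc]; linarith
        have h1 : (δ+a+r)^(p-2) ≤ (2 * max (δ+b+r) h)^(p-2) :=
          Real.rpow_le_rpow (by linarith) hle hq
        rw [Real.mul_rpow (by norm_num) (le_max_iff.2 (Or.inr hhp.le))] at h1
        have h2 : (max (δ+b+r) h)^(p-2) ≤ (δ+b+r)^(p-2) + h^(p-2) := by
          rcases le_total (δ+b+r) h with hc | hc
          · rw [max_eq_right hc]; linarith
          · rw [max_eq_left hc]; linarith
        calc (δ+a+r)^(p-2) ≤ 2^(p-2) * (max (δ+b+r) h)^(p-2) := h1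
          _ ≤ 2^(p-2) * ((δ+b+r)^(p-2) + h^(p-2)) :=
              mul_le_mul_of_nonneg_left h2 h2q.le
      have hDq : 0 ≤ (δ+a)^(p-2) := Real.rpow_nonneg (by linarith) _
      have hstep2 : h^(p-2) * r^2 ≤ lam^(-(p-2)) * ((δ+b+r)^(p-2) * r^2)
          + lam^2 * ((δ+a)^(p-2) * h^2) := by
        have hT1 : 0 ≤ lam^(-(p-2)) * ((δ+b+r)^(p-2) * r^2) := by positivity
        have hT2 : 0 ≤ lam^2 * ((δ+a)^(p-2) * h^2) := by positivity
        rcases le_or_gt r (lam * h) with hc | hc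
        · have h1 : h^(p-2) ≤ (δ+a)^(p-2) :=
            Real.rpow_le_rpow hhp.le (by rw [hh]; linarith) hq
          have h2 : r^2 ≤ lam^2 * h^2 := by nlinarith
          have key : h^(p-2) * r^2 ≤ lam^2 * ((δ+a)^(p-2) * h^2) := by
            calc h^(p-2) * r^2 ≤ h^(p-2) * (lam^2 * h^2) :=
                  mul_le_mul_of_nonneg_left h2 hHq
              _ ≤ (δ+a)^(p-2) * (lam^2 * h^2) :=
                  mul_le_mul_of_nonneg_right h1 (by positivity)
              _ = lam^2 * ((δ+a)^(p-2) * h^2) := by ring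
          linarith
        · have h1 : h^(p-2) ≤ (r/lam)^(p-2) := by
            apply Real.rpow_le_rpow hhp.le _ hq
            rw [le_div_iff₀ hlampos]; nlinarith
          have h2 : (r/lam)^(p-2) = r^(p-2) * lam^(-(p-2)) := by
            rw [Real.div_rpow hr.le hlampos.le, Real.rpow_neg hlampos.le]
            ring
          have h3 : r^(p-2) ≤ (δ+b+r)^(p-2) :=
            Real.rpow_le_rpow hr.le (by linarith) hq
          have key : h^(p-2) * r^2 ≤ lam^(-(p-2)) * ((δ+b+r)^(p-2) * r^2) := by
            calc h^(p-2) * r^2 ≤ (r^(p-2) * lam^(-(p-2))) * r^2 := by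
                  rw [h2] at h1
                  exact mul_le_mul_of_nonneg_right h1 (sq_nonneg r)
              _ ≤ ((δ+b+r)^(p-2) * lam^(-(p-2))) * r^2 :=
                  mul_le_mul_of_nonneg_right
                    (mul_le_mul_of_nonneg_right h3 hLpos.le) (sq_nonneg r)
              _ = lam^(-(p-2)) * ((δ+b+r)^(p-2) * r^2) := by ring
          linarith
      have h2qe : 2^(p-2) * lam^2 = ε := by
        rw [hlamsq]; field_simp
      rw [hmax]
      calc (δ+a+r)^(p-2) * r^2
          ≤ (2^(p-2) * ((δ+b+r)^(p-2) + h^(p-2))) * r^2 :=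
            mul_le_mul_of_nonneg_right hstep1 (sq_nonneg r)
        _ = 2^(p-2) * ((δ+b+r)^(p-2) * r^2) + 2^(p-2) * (h^(p-2) * r^2) := by ring
        _ ≤ 2^(p-2) * ((δ+b+r)^(p-2) * r^2)
            + 2^(p-2) * (lam^(-(p-2)) * ((δ+b+r)^(p-2) * r^2)
                + lam^2 * ((δ+a)^(p-2) * h^2)) := by
            have := mul_le_mul_of_nonneg_left hstep2 h2q.le
            linarith
        _ = 2^(p-2) * (1 + lam^(-(p-2))) * ((δ+b+r)^(p-2) * r^2)
            + (2^(p-2) * lam^2) * ((δ+a)^(p-2) * h^2) := by ring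
        _ = 2^(p-2) * (1 + lam^(-(p-2))) * ((δ+b+r)^(p-2) * r^2)
            + ε * ((δ+a)^(p-2) * h^2) := by rw [h2qe]
  · -- p < 2
    set M : ℝ := 2 + (2^(-(p-2))/ε)^(1/p) with hM
    clear_value M
    have hM2 : (2:ℝ) ≤ M := by
      have : (0:ℝ) ≤ (2^(-(p-2))/ε)^(1/p) := Real.rpow_nonneg (by positivity) _
      linarith
    have hMq : (1:ℝ) ≤ M^(-(p-2)) := Real.one_le_rpow (by linarith) (by linarith)
    refine ⟨M^(-(p-2)), hMq, ?_⟩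
    intro a b r ha hb hr
    have hEnn : 0 ≤ (δ + max a b)^(p-2) * (a-b)^2 :=
      mul_nonneg (Real.rpow_nonneg (by positivity) _) (sq_nonneg _)
    have hEe : 0 ≤ ε * ((δ + max a b)^(p-2) * (a-b)^2) := mul_nonneg hε.le hEnn
    have hXpos : (0:ℝ) < δ + a + r := by linarith
    have hYpos : (0:ℝ) < δ + b + r := by linarith
    have hYq : 0 ≤ (δ+b+r)^(p-2) := Real.rpow_nonneg hYpos.le _
    have hT : 0 ≤ (δ+b+r)^(p-2) * r^2 := mul_nonneg hYq (sq_nonneg r)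
    rcases le_or_gt b a with hab | hab
    · -- b ≤ a : antitone
      have h1 : (δ+a+r)^(p-2) ≤ (δ+b+r)^(p-2) :=
        Real.rpow_le_rpow_of_nonpos hYpos (by linarith) hq.le
      have h2 := mul_le_mul_of_nonneg_right h1 (sq_nonneg r)
      have h3 := mul_le_mul_of_nonneg_right hMq hT
      rw [one_mul] at h3
      linarith
    · -- a < b
      set h : ℝ := b - a with hh
      clear_value h
      have hhp : 0 < h := by rw [hh]; linarith
      have hmax : max a b = b := max_eq_right hab.le
      have hYX : δ + b + r = (δ + a + r) + h := by rw [hh]; ring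
      rcases le_or_gt (δ+b+r) (M * (δ+a+r)) with hc | hc
      · have h1 : (δ+a+r)^(p-2) ≤ ((δ+b+r)/M)^(p-2) := by
          apply Real.rpow_le_rpow_of_nonpos (by positivity) _ hq.le
          rw [div_le_iff₀ (by linarith : (0:ℝ) < M)]
          linarith
        have h2 : ((δ+b+r)/M)^(p-2) = M^(-(p-2)) * (δ+b+r)^(p-2) := by
          rw [Real.div_rpow hYpos.le (by linarith : (0:ℝ) ≤ M),
            Real.rpow_neg (by linarith : (0:ℝ) ≤ M)]
          ring
        rw [h2] at h1
        have h3 := mul_le_mul_of_nonneg_right h1 (sq_nonneg r)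
        calc (δ+a+r)^(p-2) * r^2 ≤ (M^(-(p-2)) * (δ+b+r)^(p-2)) * r^2 := h3
          _ = M^(-(p-2)) * ((δ+b+r)^(p-2) * r^2) := by ring
          _ ≤ M^(-(p-2)) * ((δ+b+r)^(p-2) * r^2) + ε * ((δ + max a b)^(p-2) * (a-b)^2) := by
              linarith [hEe]
      · -- large shift
        have hM1 : (0:ℝ) < M - 1 := by linarith
        have hbig : (M-1) * (δ+a+r) < h := by nlinarith [hc, hYX]
        have hL1 : (δ+a+r)^(p-2) ≤ r^(p-2) :=
          Real.rpow_le_rpow_of_nonpos hr (by linarith) hq.le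
        have hL2 : r^(p-2) * r^2 = r^p := by
          rw [← Real.rpow_natCast r 2, ← Real.rpow_add hr]
          congr 1; norm_num
        have hr_h : r < h / (M-1) := by
          rw [lt_div_iff₀ hM1]
          have h5 : (M-1)*r ≤ (M-1)*(δ+a+r) := mul_le_mul_of_nonneg_left (by linarith) hM1.le
          nlinarith [hbig]
        have hL3 : r^p ≤ (h/(M-1))^p := Real.rpow_le_rpow hr.le hr_h.le (by linarith)
        have hL4 : (h/(M-1))^p = h^p / (M-1)^p := Real.div_rpow hhp.le hM1.le p
        have hMp : 2^(-(p-2))/ε ≤ (M-1)^p := by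
          have hx : (0:ℝ) ≤ 2^(-(p-2))/ε := by positivity
          have e1 : ((2^(-(p-2))/ε)^(1/p))^p = 2^(-(p-2))/ε := by
            rw [← Real.rpow_mul hx, one_div, inv_mul_cancel₀ (by linarith : p ≠ 0),
              Real.rpow_one]
          have e2 : (2^(-(p-2))/ε)^(1/p) ≤ M - 1 := by rw [hM]; linarith
          calc 2^(-(p-2))/ε = ((2^(-(p-2))/ε)^(1/p))^p := e1.symm
            _ ≤ (M-1)^p := Real.rpow_le_rpow (Real.rpow_nonneg hx _) e2 (by linarith)
        have hδb2 : δ + b ≤ 2 * h := by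
          have h2' : δ + a + r ≤ h / (M-1) := by
            rw [le_div_iff₀ hM1]; nlinarith [hbig]
          have h3' : h / (M-1) ≤ h := by
            rw [div_le_iff₀ hM1]
            have h6 := mul_le_mul_of_nonneg_left (show (1:ℝ) ≤ M-1 by linarith) hhp.le
            nlinarith [h6]
          have : δ + b = (δ + a) + h := by rw [hh]; ring
          linarith
        have hδbpos : (0:ℝ) < δ + b := by linarith
        have hE1 : (2*h)^(p-2) ≤ (δ+b)^(p-2) :=
          Real.rpow_le_rpow_of_nonpos hδbpos hδb2 hq.le
        have hE2 : (2*h)^(p-2) = 2^(p-2) * h^(p-2) := Real.mul_rpow (by norm_num) hhp.le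
        have hE3 : h^(p-2) * h^2 = h^p := by
          rw [← Real.rpow_natCast h 2, ← Real.rpow_add hhp]
          congr 1; norm_num
        have hq2 : (0:ℝ) < 2^(p-2) := Real.rpow_pos_of_pos (by norm_num) _
        have hq2' : (2:ℝ)^(-(p-2)) = (2^(p-2))⁻¹ := Real.rpow_neg (by norm_num) _
        have hMppos : (0:ℝ) < (M-1)^p := Real.rpow_pos_of_pos hM1 _
        have hhpn : (0:ℝ) ≤ h^p := Real.rpow_nonneg hhp.le _
        have hfin : r^p ≤ ε * ((δ+b)^(p-2) * h^2) := by
          have key : 1 ≤ ε * 2^(p-2) * (M-1)^p := by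
            have t := mul_le_mul_of_nonneg_left hMp (mul_nonneg hε.le hq2.le)
            have teq : ε * 2^(p-2) * (2^(-(p-2))/ε) = 1 := by
              rw [hq2']; field_simp
            calc (1:ℝ) = ε * 2^(p-2) * (2^(-(p-2))/ε) := teq.symm
              _ ≤ ε * 2^(p-2) * (M-1)^p := t
          have step : h^p / (M-1)^p ≤ ε * (2^(p-2) * h^p) := by
            rw [div_le_iff₀ hMppos]
            nlinarith [mul_le_mul_of_nonneg_right key hhpn]
          have t1 : 2^(p-2)*h^p = (2*h)^(p-2)*h^2 := by rw [hE2, ← hE3]; ring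
          have t2 : (2*h)^(p-2)*h^2 ≤ (δ+b)^(p-2)*h^2 :=
            mul_le_mul_of_nonneg_right hE1 (sq_nonneg h)
          have step2 : ε * (2^(p-2) * h^p) ≤ ε * ((δ+b)^(p-2) * h^2) := by
            calc ε * (2^(p-2) * h^p) = ε * ((2*h)^(p-2)*h^2) := by rw [t1]
              _ ≤ ε * ((δ+b)^(p-2) * h^2) := mul_le_mul_of_nonneg_left t2 hε.le
          calc r^p ≤ (h/(M-1))^p := hL3
            _ = h^p/(M-1)^p := hL4
            _ ≤ ε * (2^(p-2) * h^p) := step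
            _ ≤ ε * ((δ+b)^(p-2) * h^2) := step2
        rw [hmax]
        have hXr : (δ+a+r)^(p-2) * r^2 ≤ r^p := by
          rw [← hL2]
          exact mul_le_mul_of_nonneg_right hL1 (sq_nonneg r)
        have hab2 : (a-b)^2 = h^2 := by rw [hh]; ring
        rw [hab2]
        have hnn : 0 ≤ M^(-(p-2)) * ((δ+b+r)^(p-2) * r^2) := by
          have : (0:ℝ) < M := by linarith
          positivity
        linarith


lemma shiftedN_eq {δ p : ℝ} (a r : ℝ) (ha : 0 ≤ a) (hr : 0 ≤ r) :
    shiftedN δ p a r = ∫ s in (0:ℝ)..r, ((δ+a)+s)^(p-2) * s := by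
  show (∫ s in (0:ℝ)..r, (δ + (a + s)) ^ (p - 2) * (a + s) * (s / (a + s))) = _
  apply intervalIntegral.integral_congr
  intro s hs
  rw [Set.uIcc_of_le hr] at hs
  rcases eq_or_lt_of_le (add_nonneg ha hs.1) with h0 | h0
  · have hs0 : s = 0 := by linarith [hs.1]
    have ha0 : a = 0 := by linarith
    simp [hs0, ha0]
  · have hne : a + s ≠ 0 := ne_of_gt h0
    show (δ + (a+s))^(p-2) * (a+s) * (s/(a+s)) = ((δ+a)+s)^(p-2) * s
    have hc : (a+s) * (s/(a+s)) = s := by field_simp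
    rw [mul_assoc, hc, add_assoc]

set_option maxHeartbeats 1000000 in
/-- shift-change inequality: for every `ε > 0` there is `c_ε ≥ 1` (depending on
`ε`, `p`, `δ`) such that `φ_{|A^sym|}(r) ≤ c_ε·φ_{|B^sym|}(r) + ε·|F(A)-F(B)|²`. -/
theorem shift_change (δ p : ℝ) (hδ : 0 ≤ δ) (hp : 1 < p) :
    ∀ ε : ℝ, 0 < ε → ∃ c : ℝ, 1 ≤ c ∧
      ∀ (d : ℕ) (A B : Matrix (Fin d) (Fin d) ℝ) (r : ℝ), 0 ≤ r →
        shiftedN δ p (frob (msym A)) r ≤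
          c * shiftedN δ p (frob (msym B)) r
            + ε * frob (Fmap δ p A - Fmap δ p B) ^ 2 := by
  intro ε hε
  have hCu : (0:ℝ) < 2^|p-2| := Real.rpow_pos_of_pos (by norm_num) _
  have hCl : (0:ℝ) < 2^(-|p-2|)/4 := by positivity
  have hε' : 0 < ε/(4*2^|p-2|) := by positivity
  obtain ⟨c', hc'1, hc'⟩ := star_lemma hδ hp hε'
  refine ⟨max 1 (2^|p-2| * c' / (2^(-|p-2|)/4)), le_max_left _ _, ?_⟩
  intro d A B r hr
  set a := frob (msym A) with hadef
  set b := frob (msym B) with hbdef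
  have ha : 0 ≤ a := Real.sqrt_nonneg _
  have hb : 0 ≤ b := Real.sqrt_nonneg _
  have hFnn : 0 ≤ frob (Fmap δ p A - Fmap δ p B) := frob_nonneg _
  rcases eq_or_lt_of_le hr with hr0 | hr0
  · -- r = 0
    have z1 : shiftedN δ p a r = 0 := by
      rw [← hr0]; exact intervalIntegral.integral_same
    have z2 : shiftedN δ p b r = 0 := by
      rw [← hr0]; exact intervalIntegral.integral_same
    rw [z1, z2, mul_zero, zero_add]
    positivity
  · -- r > 0
    have key1 : shiftedN δ p a r ≤ 2^|p-2| * ((δ+a+r)^(p-2) * r^2) := by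
      rw [shiftedN_eq a r ha hr]
      exact upper hp (by linarith) hr0
    have key2 : (δ+a+r)^(p-2) * r^2 ≤ c' * ((δ+b+r)^(p-2) * r^2)
        + (ε/(4*2^|p-2|)) * ((δ + max a b)^(p-2) * (a-b)^2) := hc' a b r ha hb hr0
    have key3 : (2^(-|p-2|)/4) * ((δ+b+r)^(p-2) * r^2) ≤ shiftedN δ p b r := by
      rw [shiftedN_eq b r hb hr]
      exact lower hp (by linarith) hr
    -- relate the max-term to the F-difference
    have he2 : ∀ x : ℝ, 0 ≤ x → ((δ+x)^((p-2)/2))^2 = (δ+x)^(p-2) := by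
      intro x hx
      rw [← Real.rpow_natCast ((δ+x)^((p-2)/2)) 2, ← Real.rpow_mul (by linarith)]
      congr 1
      push_cast
      ring
    have hfa : frob (Fmap δ p A) = (δ+a)^((p-2)/2) * a := by
      unfold Fmap
      rw [frob_smul, ← hadef, abs_of_nonneg (Real.rpow_nonneg (by linarith) _)]
    have hfb : frob (Fmap δ p B) = (δ+b)^((p-2)/2) * b := by
      unfold Fmap
      rw [frob_smul, ← hbdef, abs_of_nonneg (Real.rpow_nonneg (by linarith) _)]
    have habsF : |(δ+a)^((p-2)/2) * a - (δ+b)^((p-2)/2) * b|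
        ≤ frob (Fmap δ p A - Fmap δ p B) := by
      rw [← hfa, ← hfb]
      exact frob_sub_frob_le _ _
    have hmaxe : (δ + max a b)^((p-2)/2) * |a-b|
        ≤ 2 * frob (Fmap δ p A - Fmap δ p B) := by
      rcases le_total b a with hab | hab
      · rw [max_eq_left hab, abs_of_nonneg (by linarith : 0 ≤ a - b)]
        have hF := lemF hδ hp hb hab
        have h1 : (δ+a)^((p-2)/2)*a - (δ+b)^((p-2)/2)*b
            ≤ frob (Fmap δ p A - Fmap δ p B) :=
          le_trans (le_abs_self _) habsF
        linarith
      · rw [max_eq_right hab, abs_of_nonpos (by linarith : a - b ≤ 0)]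
        have hF := lemF hδ hp ha hab
        have h1 : (δ+b)^((p-2)/2)*b - (δ+a)^((p-2)/2)*a
            ≤ frob (Fmap δ p A - Fmap δ p B) := by
          rw [abs_sub_comm ((δ+a)^((p-2)/2) * a) ((δ+b)^((p-2)/2) * b)] at habsF
          exact le_trans (le_abs_self _) habsF
        linarith
    have key4 : (δ + max a b)^(p-2) * (a-b)^2
        ≤ 4 * frob (Fmap δ p A - Fmap δ p B)^2 := by
      have hmx : 0 ≤ max a b := le_max_of_le_left ha
      have e1 : (δ + max a b)^(p-2) * (a-b)^2
          = ((δ + max a b)^((p-2)/2) * |a-b|)^2 := by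
        rw [mul_pow, he2 _ hmx, sq_abs]
      rw [e1]
      have h0 : 0 ≤ (δ + max a b)^((p-2)/2) * |a-b| :=
        mul_nonneg (Real.rpow_nonneg (by positivity) _) (abs_nonneg _)
      nlinarith [hmaxe, hFnn]
    -- combine everything
    have hψb : 0 ≤ shiftedN δ p b r := by
      have : 0 ≤ (2^(-|p-2|)/4) * ((δ+b+r)^(p-2) * r^2) := by
        have : (0:ℝ) < δ + b + r := by linarith
        positivity
      linarith
    have step1 : shiftedN δ p a r ≤ 2^|p-2| * c' * ((δ+b+r)^(p-2) * r^2)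
        + 2^|p-2| * (ε/(4*2^|p-2|)) * ((δ + max a b)^(p-2) * (a-b)^2) := by
      have := mul_le_mul_of_nonneg_left key2 hCu.le
      nlinarith [this]
    have step2 : 2^|p-2| * c' * ((δ+b+r)^(p-2) * r^2)
        ≤ (2^|p-2| * c' / (2^(-|p-2|)/4)) * shiftedN δ p b r := by
      have hcc : 0 ≤ 2^|p-2| * c' / (2^(-|p-2|)/4) := by positivity
      have := mul_le_mul_of_nonneg_left key3 hcc
      calc 2^|p-2| * c' * ((δ+b+r)^(p-2) * r^2)
          = (2^|p-2| * c' / (2^(-|p-2|)/4)) * ((2^(-|p-2|)/4) * ((δ+b+r)^(p-2) * r^2)) := by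
            field_simp
          _ ≤ (2^|p-2| * c' / (2^(-|p-2|)/4)) * shiftedN δ p b r := this
    have step3 : (2^|p-2| * c' / (2^(-|p-2|)/4)) * shiftedN δ p b r
        ≤ max 1 (2^|p-2| * c' / (2^(-|p-2|)/4)) * shiftedN δ p b r :=
      mul_le_mul_of_nonneg_right (le_max_right _ _) hψb
    have step4 : 2^|p-2| * (ε/(4*2^|p-2|)) * ((δ + max a b)^(p-2) * (a-b)^2)
        ≤ ε * frob (Fmap δ p A - Fmap δ p B)^2 := by
      have hq : 2^|p-2| * (ε/(4*2^|p-2|)) = ε/4 := by field_simp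
      rw [hq]
      nlinarith [key4, hε.le]
    linarith
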